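/- Let $\bar Q$ be a conservative $Q$-matrix on a finite set $\S$, $C:\S\to\mathbb{R}$, $p>0$, and set $\bar Q_p=\bar Q+p\,\mathrm{diag}(C(1),\dots,C(M))$ and $\eta_{p,C}=-\max\{\mathrm{Re}(\gamma):\gamma\in\mathrm{Spec}(\bar Q_p)\}$. If $\bar Q$ is irreducible, then the matrix exponential satisfies: there exist constants $\kappa_1(p),\kappa_2(p)>0$ such that for every $i_0\in\S$ and all $t>0$, $\kappa_1(p)e^{-\eta_{p,C}t}\le\big(e^{t\bar Q_p}\mathbf 1\big)_{i_0}\le\kappa_2(p)e^{-\eta_{p,C}t}$. -/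

import Mathlib

open Matrix

open NormedSpace

section FKAux

section Infra

variable {M : ℕ}

lemma exp_hasSum {R : Type*} [NormedRing R] [NormedAlgebra ℝ R] [NormedAlgebra ℚ R] [CompleteSpace R]
    (X : Matrix (Fin M) (Fin M) R) :
    HasSum (fun n : ℕ => ((Nat.factorial n : ℝ))⁻¹ • X ^ n) (exp X) := by
  open scoped Matrix.Norms.Operator in
  have hc : @CompleteSpace (Matrix (Fin M) (Fin M) R) PseudoMetricSpace.toUniformSpace := by
    exact (inferInstance : CompleteSpace (Fin M → Fin M → R))
  open scoped Matrix.Norms.Operator in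
  exact NormedSpace.exp_series_hasSum_exp' X

lemma exp_entry_hasSum (X : Matrix (Fin M) (Fin M) ℝ) (i j : Fin M) :
    HasSum (fun n : ℕ => ((Nat.factorial n : ℝ))⁻¹ * (X ^ n) i j) ((exp X) i j) := by
  have h := (exp_hasSum X).map (AddMonoidHom.mk' (fun Y : Matrix (Fin M) (Fin M) ℝ => Y i j)
    (fun Y Z => rfl)) (by exact ((continuous_apply j).comp (continuous_apply i)))
  exact h

lemma pow_entry_nonneg {X : Matrix (Fin M) (Fin M) ℝ} (h : ∀ i j, 0 ≤ X i j) (n : ℕ) :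
    ∀ i j, 0 ≤ (X ^ n) i j := by
  induction n with
  | zero => intro i j; by_cases hij : i = j <;> simp [pow_zero, Matrix.one_apply, hij]
  | succ n ih =>
    intro i j
    rw [pow_succ, Matrix.mul_apply]
    exact Finset.sum_nonneg fun k _ => mul_nonneg (ih i k) (h k j)

lemma exp_entry_nonneg {X : Matrix (Fin M) (Fin M) ℝ} (h : ∀ i j, 0 ≤ X i j) (i j : Fin M) :
    0 ≤ (exp X) i j :=
  (exp_entry_hasSum X i j).nonneg fun n =>
    mul_nonneg (by positivity) (pow_entry_nonneg h n i j)

lemma exp_entry_ge_term {X : Matrix (Fin M) (Fin M) ℝ} (h : ∀ i j, 0 ≤ X i j) (i j : Fin M)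
    (k : ℕ) : ((Nat.factorial k : ℝ))⁻¹ * (X ^ k) i j ≤ (exp X) i j :=
  le_hasSum (exp_entry_hasSum X i j) k fun n _ =>
    mul_nonneg (by positivity) (pow_entry_nonneg h n i j)

lemma exp_add_smul_one (X : Matrix (Fin M) (Fin M) ℝ) (r : ℝ) :
    exp (X + r • (1 : Matrix (Fin M) (Fin M) ℝ)) = Real.exp r • exp X := by
  have hcomm : Commute X (r • (1 : Matrix (Fin M) (Fin M) ℝ)) :=
    (Commute.one_right X).smul_right r
  rw [Matrix.exp_add_of_commute _ _ hcomm]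
  have h1 : r • (1 : Matrix (Fin M) (Fin M) ℝ) = algebraMap ℝ _ r :=
    (Algebra.algebraMap_eq_smul_one r).symm
  have h2 : exp (algebraMap ℝ (Matrix (Fin M) (Fin M) ℝ) r)
      = algebraMap ℝ (Matrix (Fin M) (Fin M) ℝ) (exp r) := by
    open scoped Matrix.Norms.Operator in
    exact (map_exp (algebraMap ℝ (Matrix (Fin M) (Fin M) ℝ)) (continuous_algebraMap _ _) r).symm
  rw [h1, h2,
    Algebra.algebraMap_eq_smul_one, mul_smul_comm, mul_one, ← Real.exp_eq_exp_ℝ]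

lemma exp_smul_add (X : Matrix (Fin M) (Fin M) ℝ) (s t : ℝ) :
    exp ((s + t) • X) = exp (s • X) * exp (t • X) := by
  rw [add_smul]
  exact Matrix.exp_add_of_commute _ _ (((Commute.refl X).smul_left s).smul_right t)

lemma exp_continuous_smul {R : Type*} [NormedRing R] [NormedAlgebra ℝ R] [NormedAlgebra ℚ R] [CompleteSpace R]
    (X : Matrix (Fin M) (Fin M) R) :
    Continuous (fun t : ℝ => exp (t • X)) := by
  open scoped Matrix.Norms.Operator in
  have hc : @CompleteSpace (Matrix (Fin M) (Fin M) R) PseudoMetricSpace.toUniformSpace := by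
    exact (inferInstance : CompleteSpace (Fin M → Fin M → R))
  open scoped Matrix.Norms.Operator in
  exact exp_continuous.comp (continuous_id.smul continuous_const)

lemma pow_path_pos {N : Matrix (Fin M) (Fin M) ℝ} (hN : ∀ i j, 0 ≤ N i j)
    (k : ℕ) (d : ℕ → Fin M) (hd : ∀ l < k, 0 < N (d l) (d (l + 1))) :
    0 < (N ^ k) (d 0) (d k) := by
  induction k with
  | zero => simp [Matrix.one_apply]
  | succ k ih =>
    have h1 : 0 < (N ^ k) (d 0) (d k) := ih fun l hl => hd l (by omega)
    rw [pow_succ, Matrix.mul_apply]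
    have h2 : 0 < (N ^ k) (d 0) (d k) * N (d k) (d (k + 1)) :=
      mul_pos h1 (hd k (by omega))
    exact Finset.sum_pos' (fun m _ => mul_nonneg (pow_entry_nonneg hN k _ _) (hN _ _))
      ⟨d k, Finset.mem_univ _, h2⟩

lemma hasDerivAt_exp_mulVec (A : Matrix (Fin M) (Fin M) ℝ) (w : Fin M → ℝ) (i : Fin M) (t : ℝ) :
    HasDerivAt (fun s : ℝ => (exp (s • A) *ᵥ w) i)
      ((exp (t • A) *ᵥ (A *ᵥ w)) i) t := by
  have hD : Filter.Tendsto (slope (fun s : ℝ => exp (s • A)) t) (nhdsWithin t {t}ᶜ)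
      (nhds (exp (t • A) * A)) := by
    open scoped Matrix.Norms.Operator in
    exact (hasDerivAt_exp_smul_const (𝕂 := ℝ) A t).tendsto_slope
  have hφ : Continuous (fun X : Matrix (Fin M) (Fin M) ℝ => (X *ᵥ w) i) := by
    have : (fun X : Matrix (Fin M) (Fin M) ℝ => (X *ᵥ w) i)
        = fun X => ∑ j, X i j * w j := by
      funext X; simp [Matrix.mulVec, dotProduct]
    rw [this]
    exact continuous_finset_sum _ fun j _ =>
      ((continuous_id.matrix_elem i j).mul continuous_const)
  rw [hasDerivAt_iff_tendsto_slope]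
  have key : ∀ s : ℝ, slope (fun s : ℝ => (exp (s • A) *ᵥ w) i) t s
      = ((slope (fun s : ℝ => exp (s • A)) t s) *ᵥ w) i := by
    intro s
    simp only [slope, vsub_eq_sub]
    rw [Matrix.smul_mulVec, Matrix.sub_mulVec]
    simp [Pi.smul_apply, Pi.sub_apply, smul_eq_mul]
  have h2 := (hφ.continuousAt (x := exp (t • A) * A)).tendsto.comp hD
  have h3 : Filter.Tendsto (fun s => (slope (fun s : ℝ => exp (s • A)) t s *ᵥ w) i)
      (nhdsWithin t {t}ᶜ) (nhds ((exp (t • A) *ᵥ (A *ᵥ w)) i)) := by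
    simpa [Matrix.mulVec_mulVec, Function.comp_def] using h2
  exact h3.congr (fun s => (key s).symm)

lemma exp_mulVec_eigen (Ac : Matrix (Fin M) (Fin M) ℂ) (v : Fin M → ℂ) (z : ℂ)
    (hv : Ac *ᵥ v = z • v) (t : ℝ) :
    exp (t • Ac) *ᵥ v = Complex.exp (t * z) • v := by
  have hpow : ∀ n : ℕ, Ac ^ n *ᵥ v = z ^ n • v := by
    intro n
    induction n with
    | zero => simp
    | succ n ih =>
      rw [pow_succ', pow_succ', ← Matrix.mulVec_mulVec, ih, Matrix.mulVec_smul, hv,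
        smul_smul, mul_comm]
  have hcont : Continuous (fun X : Matrix (Fin M) (Fin M) ℂ => X *ᵥ v) := by
    have : (fun X : Matrix (Fin M) (Fin M) ℂ => X *ᵥ v)
        = fun X => fun i => ∑ j, X i j * v j := by
      funext X i; simp [Matrix.mulVec, dotProduct]
    rw [this]
    exact continuous_pi fun i => continuous_finset_sum _ fun j _ =>
      ((continuous_id.matrix_elem i j).mul continuous_const)
  have h1 := (exp_hasSum (t • Ac)).map
    (AddMonoidHom.mk' (fun X : Matrix (Fin M) (Fin M) ℂ => X *ᵥ v)
      (fun X Y => Matrix.add_mulVec X Y v)) hcont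
  have h2 : HasSum (fun n : ℕ => ((↑t * z) ^ n / (Nat.factorial n : ℂ)) • v)
      (exp (t • Ac) *ᵥ v) := by
    refine h1.congr_fun fun n => Eq.symm ?_
    simp only [Function.comp_apply, AddMonoidHom.mk'_apply]
    rw [smul_pow, Matrix.smul_mulVec, Matrix.smul_mulVec, hpow n]
    funext i
    simp only [Pi.smul_apply, Complex.real_smul, smul_eq_mul]
    push_cast
    field_simp
    ring
  have h3 : HasSum (fun n : ℕ => ((↑t * z) ^ n / (Nat.factorial n : ℂ)) • v)
      (Complex.exp (↑t * z) • v) := by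
    have := (expSeries_div_hasSum_exp_of_mem_ball (𝕂 := ℂ) (↑t * z)
      (by rw [expSeries_radius_eq_top]; exact edist_lt_top _ _)).smul_const v
    simpa [Complex.exp_eq_exp_ℂ] using this
  exact h2.unique h3

lemma exp_map_ofReal (X : Matrix (Fin M) (Fin M) ℝ) :
    exp (X.map Complex.ofReal) = (exp X).map Complex.ofReal := by
  have hc : Continuous (fun Y : Matrix (Fin M) (Fin M) ℝ =>
      (Complex.ofRealAm.mapMatrix (m := Fin M)) Y) := by
    simpa [AlgHom.mapMatrix_apply] using
      (continuous_id (X := Matrix (Fin M) (Fin M) ℝ)).matrix_map Complex.continuous_ofReal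
  open scoped Matrix.Norms.Operator in
  have := map_exp (Complex.ofRealAm.mapMatrix (m := Fin M)) hc X
  exact this.symm

end Infra
lemma core_bounds (M : ℕ) (hM : 0 < M) (A : Matrix (Fin M) (Fin M) ℝ)
    (hoffA : ∀ i j, i ≠ j → 0 ≤ A i j)
    (hirrA : ∀ i j : Fin M, i ≠ j → ∃ k : ℕ, ∃ d : ℕ → Fin M, d 0 = i ∧ d k = j ∧
      ∀ l, l < k → d l ≠ d (l + 1) ∧ 0 < A (d l) (d (l + 1))) :
    ∃ l κ₁ κ₂ : ℝ, 0 < κ₁ ∧ 0 < κ₂ ∧ ∀ t : ℝ, 0 < t → ∀ i,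
      κ₁ * Real.exp (l * t) ≤ (exp (t • A) *ᵥ fun _ => (1:ℝ)) i ∧
      (exp (t • A) *ᵥ fun _ => (1:ℝ)) i ≤ κ₂ * Real.exp (l * t) := by
  have hne : (Finset.univ : Finset (Fin M)).Nonempty := ⟨⟨0, hM⟩, Finset.mem_univ _⟩
  set c : ℝ := ∑ i, |A i i| with hcdef
  have hc0 : 0 ≤ c := Finset.sum_nonneg fun i _ => abs_nonneg _
  set N : Matrix (Fin M) (Fin M) ℝ := A + c • 1 with hNdef
  have hNnn : ∀ i j, 0 ≤ N i j := by
    intro i j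
    by_cases hij : i = j
    · subst hij
      have h1 : |A i i| ≤ c := Finset.single_le_sum (fun i _ => abs_nonneg (A i i))
        (Finset.mem_univ i)
      have h2 : N i i = A i i + c := by
        rw [hNdef]
        simp [Matrix.add_apply, Matrix.smul_apply, Matrix.one_apply_eq, smul_eq_mul]
      rw [h2]
      have := neg_abs_le (A i i)
      linarith
    · have h2 : N i j = A i j := by
        rw [hNdef]
        simp [Matrix.add_apply, Matrix.smul_apply, Matrix.one_apply_ne hij]
      rw [h2]; exact hoffA i j hij
  have hsmulN : ∀ t : ℝ, t • N = t • A + (c * t) • (1 : Matrix (Fin M) (Fin M) ℝ) := by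
    intro t; rw [hNdef, smul_add, smul_smul, mul_comm]
  have hEN : ∀ t : ℝ, exp (t • N) = Real.exp (c * t) • exp (t • A) := by
    intro t; rw [hsmulN, exp_add_smul_one]
  have hent : ∀ (t : ℝ) (i j : Fin M),
      (exp (t • A)) i j = Real.exp (-(c * t)) * (exp (t • N)) i j := by
    intro t i j
    rw [hEN t]
    simp only [Matrix.smul_apply, smul_eq_mul]
    rw [← mul_assoc, ← Real.exp_add]
    simp
  have hNtnn : ∀ t : ℝ, 0 ≤ t → ∀ i j, 0 ≤ (t • N) i j := by
    intro t ht i j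
    simp only [Matrix.smul_apply, smul_eq_mul]
    exact mul_nonneg ht (hNnn i j)
  have hEnn : ∀ t : ℝ, 0 ≤ t → ∀ i j, 0 ≤ (exp (t • A)) i j := by
    intro t ht i j
    rw [hent]
    exact mul_nonneg (Real.exp_nonneg _) (exp_entry_nonneg (hNtnn t ht) i j)
  have hdiag : ∀ t : ℝ, 0 ≤ t → ∀ i, Real.exp (-(c * t)) ≤ (exp (t • A)) i i := by
    intro t ht i
    rw [hent]
    have h0 := exp_entry_ge_term (hNtnn t ht) i i 0
    simp only [Nat.factorial_zero, Nat.cast_one, inv_one, pow_zero, Matrix.one_apply_eq,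
      one_mul] at h0
    nlinarith [Real.exp_pos (-(c * t))]
  clear_value c
  set u : ℝ → Fin M → ℝ := fun t => exp (t • A) *ᵥ (fun _ => (1:ℝ)) with hudef
  have huexp : ∀ (t : ℝ) (i : Fin M), u t i = ∑ j, (exp (t • A)) i j := by
    intro t i; simp [hudef, Matrix.mulVec, dotProduct]
  have hulow : ∀ t : ℝ, 0 ≤ t → ∀ i, Real.exp (-(c * t)) ≤ u t i := by
    intro t ht i
    rw [huexp]
    calc Real.exp (-(c * t)) ≤ (exp (t • A)) i i := hdiag t ht i
      _ ≤ ∑ j, (exp (t • A)) i j :=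
        Finset.single_le_sum (fun j _ => hEnn t ht i j) (Finset.mem_univ i)
  have hunn : ∀ t : ℝ, 0 ≤ t → ∀ i, 0 ≤ u t i := fun t ht i =>
    le_trans (Real.exp_nonneg _) (hulow t ht i)
  set f : ℝ → ℝ := fun t => Finset.univ.sup' hne (u t) with hfdef
  set g : ℝ → ℝ := fun t => Finset.univ.inf' hne (u t) with hgdef
  have hgle : ∀ (t : ℝ) (i : Fin M), g t ≤ u t i := fun t i =>
    Finset.inf'_le _ (Finset.mem_univ i)
  have hfle : ∀ (t : ℝ) (i : Fin M), u t i ≤ f t := fun t i =>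
    Finset.le_sup' _ (Finset.mem_univ i)
  have hgf : ∀ t : ℝ, g t ≤ f t := fun t =>
    le_trans (hgle t ⟨0, hM⟩) (hfle t ⟨0, hM⟩)
  have hglow : ∀ t : ℝ, 0 ≤ t → Real.exp (-(c * t)) ≤ g t := fun t ht =>
    Finset.le_inf' hne _ (fun i _ => hulow t ht i)
  have hgpos : ∀ t : ℝ, 0 ≤ t → 0 < g t := fun t ht =>
    lt_of_lt_of_le (Real.exp_pos _) (hglow t ht)
  have hfpos : ∀ t : ℝ, 0 ≤ t → 0 < f t := fun t ht => lt_of_lt_of_le (hgpos t ht) (hgf t)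
  have husum : ∀ (s t : ℝ) (i : Fin M), u (s + t) i = ∑ j, (exp (s • A)) i j * u t j := by
    intro s t i
    show (exp ((s + t) • A) *ᵥ fun _ => (1:ℝ)) i = _
    rw [exp_smul_add, ← Matrix.mulVec_mulVec]
    simp [Matrix.mulVec, dotProduct, hudef]
  have hfsub : ∀ s t : ℝ, 0 ≤ s → 0 ≤ t → f (s + t) ≤ f s * f t := by
    intro s t hs ht
    apply Finset.sup'_le
    intro i _
    rw [husum]
    calc ∑ j, (exp (s • A)) i j * u t j
        ≤ ∑ j, (exp (s • A)) i j * f t :=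
          Finset.sum_le_sum fun j _ => mul_le_mul_of_nonneg_left (hfle t j) (hEnn s hs i j)
      _ = (∑ j, (exp (s • A)) i j) * f t := by rw [Finset.sum_mul]
      _ = u s i * f t := by rw [huexp]
      _ ≤ f s * f t := mul_le_mul_of_nonneg_right (hfle s i) (le_of_lt (hfpos t ht))
  have hgsup : ∀ s t : ℝ, 0 ≤ s → 0 ≤ t → g s * g t ≤ g (s + t) := by
    intro s t hs ht
    apply Finset.le_inf'
    intro i _
    rw [husum]
    calc g s * g t ≤ u s i * g t :=
          mul_le_mul_of_nonneg_right (hgle s i) (le_of_lt (hgpos t ht))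
      _ = (∑ j, (exp (s • A)) i j) * g t := by rw [huexp]
      _ = ∑ j, (exp (s • A)) i j * g t := by rw [Finset.sum_mul]
      _ ≤ ∑ j, (exp (s • A)) i j * u t j :=
          Finset.sum_le_sum fun j _ => mul_le_mul_of_nonneg_left (hgle t j) (hEnn s hs i j)
  -- positivity of entries of exp(1•A)
  have hE1pos : ∀ i j, 0 < (exp ((1:ℝ) • A)) i j := by
    intro i j
    have h1N : (1:ℝ) • N = N := one_smul _ _
    have hent1 : (exp ((1:ℝ) • A)) i j = Real.exp (-(c * 1)) * (exp N) i j := by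
      rw [hent, h1N]
    rw [hent1]
    apply mul_pos (Real.exp_pos _)
    by_cases hij : i = j
    · subst hij
      have h0 := exp_entry_ge_term hNnn i i 0
      simp only [Nat.factorial_zero, Nat.cast_one, inv_one, pow_zero, Matrix.one_apply_eq,
        one_mul] at h0
      linarith
    · obtain ⟨k, d, hd0, hdk, hstep⟩ := hirrA i j hij
      have hkpos : 0 < (N ^ k) (d 0) (d k) := by
        apply pow_path_pos hNnn
        intro l hl
        obtain ⟨hne', hpos⟩ := hstep l hl
        have hNA : N (d l) (d (l + 1)) = A (d l) (d (l + 1)) := by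
          rw [hNdef]
          simp [Matrix.add_apply, Matrix.smul_apply, Matrix.one_apply_ne hne']
        rw [hNA]; exact hpos
      rw [hd0, hdk] at hkpos
      have hterm := exp_entry_ge_term hNnn i j k
      have : 0 < ((Nat.factorial k : ℝ))⁻¹ * (N ^ k) i j := by positivity
      linarith
  set δ : ℝ := Finset.univ.inf' hne
    (fun i => Finset.univ.inf' hne (fun j => (exp ((1:ℝ) • A)) i j)) with hδdef
  have hδpos : 0 < δ := by
    rw [hδdef, Finset.lt_inf'_iff]
    intro i _
    rw [Finset.lt_inf'_iff]
    intro j _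
    exact hE1pos i j
  have hδle : ∀ i j, δ ≤ (exp ((1:ℝ) • A)) i j := fun i j =>
    le_trans (Finset.inf'_le _ (Finset.mem_univ i)) (Finset.inf'_le _ (Finset.mem_univ j))
  clear_value δ
  have hbridge : ∀ t : ℝ, 0 ≤ t → δ * f t ≤ g (1 + t) := by
    intro t ht
    apply Finset.le_inf'
    intro i _
    rw [husum]
    obtain ⟨i0, _, hi0⟩ := Finset.exists_mem_eq_sup' hne (u t)
    have hfi0 : f t = u t i0 := hi0
    calc δ * f t = δ * u t i0 := by rw [hfi0]
      _ ≤ ∑ j, δ * u t j :=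
        Finset.single_le_sum (fun j _ => mul_nonneg hδpos.le (hunn t ht j)) (Finset.mem_univ i0)
      _ ≤ ∑ j, (exp ((1:ℝ) • A)) i j * u t j :=
        Finset.sum_le_sum fun j _ => mul_le_mul_of_nonneg_right (hδle i j) (hunn t ht j)
  -- Fekete
  set a : ℕ → ℝ := fun n => Real.log (f n) with hadef
  have hsub : Subadditive a := by
    intro m n
    have h1 : f ((m + n : ℕ) : ℝ) ≤ f m * f n := by
      rw [Nat.cast_add]; exact hfsub m n (Nat.cast_nonneg m) (Nat.cast_nonneg n)
    have hp1 : 0 < f ((m + n : ℕ) : ℝ) := hfpos _ (Nat.cast_nonneg _)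
    have hp2 : 0 < f (m : ℝ) := hfpos _ (Nat.cast_nonneg _)
    have hp3 : 0 < f (n : ℝ) := hfpos _ (Nat.cast_nonneg _)
    calc a (m + n) ≤ Real.log (f m * f n) := by
          rw [hadef]
          exact (Real.log_le_log_iff hp1 (mul_pos hp2 hp3)).mpr h1
      _ = a m + a n := by rw [hadef]; exact Real.log_mul (ne_of_gt hp2) (ne_of_gt hp3)
  have hbdd : BddBelow (Set.range fun n : ℕ => a n / n) := by
    refine ⟨-c, ?_⟩
    rintro x ⟨n, rfl⟩
    rcases Nat.eq_zero_or_pos n with hn | hn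
    · subst hn; simp; linarith
    · have hnR : (0:ℝ) < n := by exact_mod_cast hn
      have h1 : Real.exp (-(c * n)) ≤ f n := le_trans (hglow n (Nat.cast_nonneg n)) (hgf n)
      have h2 : -(c * n) ≤ a n := by
        rw [hadef]
        exact (Real.le_log_iff_exp_le (hfpos _ (Nat.cast_nonneg n))).mpr h1
      rw [le_div_iff₀ hnR]
      nlinarith
  set l : ℝ := hsub.lim with hldef
  have hlim := hsub.tendsto_lim hbdd
  rw [← hldef] at hlim
  have hf0 : f 0 = 1 := by
    have hu0 : u 0 = fun _ => (1:ℝ) := by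
      rw [hudef]
      show exp ((0:ℝ) • A) *ᵥ (fun _ => (1:ℝ)) = _
      rw [zero_smul, exp_zero, Matrix.one_mulVec]
    show Finset.univ.sup' hne (u 0) = 1
    rw [hu0, Finset.sup'_const]
  have hflow_nat : ∀ n : ℕ, Real.exp (l * n) ≤ f n := by
    intro n
    rcases Nat.eq_zero_or_pos n with hn | hn
    · subst hn; simp [hf0]
    · have h1 : l ≤ a n / n := hsub.lim_le_div hbdd hn.ne'
      have hnR : (0:ℝ) < n := by exact_mod_cast hn
      rw [le_div_iff₀ hnR] at h1
      have h2 : Real.exp (l * n) ≤ Real.exp (a n) := Real.exp_le_exp.mpr (by linarith)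
      rwa [hadef, Real.exp_log (hfpos _ (Nat.cast_nonneg n))] at h2
  have hgup_nat : ∀ n : ℕ, 1 ≤ n → g n ≤ Real.exp (l * n) := by
    intro m hm
    have hmR : (0:ℝ) < m := by exact_mod_cast hm
    have hgm : 0 < g m := hgpos _ (Nat.cast_nonneg m)
    have hksup : ∀ k : ℕ, 1 ≤ k → (k : ℝ) * Real.log (g m) ≤ Real.log (g ((k * m : ℕ) : ℝ)) := by
      intro k hk
      induction k with
      | zero => omega
      | succ k ih =>
        rcases Nat.eq_zero_or_pos k with h0 | hkpos
        · subst h0; simp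
        · have ih' := ih hkpos
          have hgkm : 0 < g ((k * m : ℕ) : ℝ) := hgpos _ (Nat.cast_nonneg _)
          have hcast : (((k + 1) * m : ℕ) : ℝ) = ((k * m : ℕ) : ℝ) + (m : ℝ) := by
            push_cast; ring
          have hsup := hgsup ((k * m : ℕ) : ℝ) m (Nat.cast_nonneg _) (Nat.cast_nonneg m)
          have hl1 : Real.log (g ((k * m : ℕ) : ℝ)) + Real.log (g m)
              ≤ Real.log (g (((k + 1) * m : ℕ) : ℝ)) := by
            rw [hcast, ← Real.log_mul (ne_of_gt hgkm) (ne_of_gt hgm)]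
            exact (Real.log_le_log_iff (mul_pos hgkm hgm)
              (hgpos _ (by positivity))).mpr hsup
          have hc2 : ((k + 1 : ℕ) : ℝ) = (k : ℝ) + 1 := by push_cast; ring
          rw [hc2]
          linarith
    have hlogf : ∀ k : ℕ, 1 ≤ k →
        Real.log (g m) / m ≤ a (k * m) / ((k * m : ℕ) : ℝ) := by
      intro k hk
      have h1 := hksup k hk
      have h2 : Real.log (g ((k * m : ℕ) : ℝ)) ≤ a (k * m) := by
        rw [hadef]
        exact (Real.log_le_log_iff (hgpos _ (Nat.cast_nonneg _))
          (hfpos _ (Nat.cast_nonneg _))).mpr (hgf _)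
      have hkR : (0:ℝ) < k := by exact_mod_cast hk
      have hkmR : (0:ℝ) < ((k * m : ℕ) : ℝ) := by
        push_cast; positivity
      rw [div_le_div_iff₀ hmR hkmR]
      have hcast2 : ((k * m : ℕ) : ℝ) = (k : ℝ) * (m : ℝ) := by push_cast; ring
      rw [hcast2]
      nlinarith
    have hT : Filter.Tendsto (fun k : ℕ => a (k * m) / ((k * m : ℕ) : ℝ))
        Filter.atTop (nhds l) := by
      apply hlim.comp
      exact Filter.tendsto_atTop_mono (fun k => Nat.le_mul_of_pos_right k (by omega))
        Filter.tendsto_id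
    have hfin : Real.log (g m) / m ≤ l :=
      ge_of_tendsto hT (Filter.eventually_atTop.mpr ⟨1, fun k hk => hlogf k hk⟩)
    rw [div_le_iff₀ hmR] at hfin
    exact (Real.log_le_iff_le_exp hgm).mp (by linarith)
  -- F₁ : bound of f on [0,1]
  have hcontu : ∀ i, Continuous fun s : ℝ => u s i := by
    intro i
    have heq : (fun s : ℝ => u s i) = fun s => ∑ j, (exp (s • A)) i j :=
      funext fun s => huexp s i
    rw [heq]
    exact continuous_finset_sum _ fun j _ =>
      (continuous_apply j).comp ((continuous_apply i).comp (exp_continuous_smul A))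
  set S : ℝ → ℝ := fun s => ∑ i, u s i with hSdef
  have hScont : Continuous S := continuous_finset_sum _ fun i _ => hcontu i
  obtain ⟨s₁, hs₁mem, hs₁max⟩ := isCompact_Icc.exists_isMaxOn
    (Set.nonempty_Icc.mpr zero_le_one) hScont.continuousOn
  set F₁ : ℝ := S s₁ with hF₁def
  have hfF₁ : ∀ s : ℝ, s ∈ Set.Icc (0:ℝ) 1 → f s ≤ F₁ := by
    intro s hs
    have h1 : f s ≤ S s := by
      apply Finset.sup'_le
      intro i _
      exact Finset.single_le_sum (fun j _ => hunn s hs.1 j) (Finset.mem_univ i)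
    exact le_trans h1 (hs₁max hs)
  have hF₁pos : 0 < F₁ :=
    lt_of_lt_of_le (hfpos 1 zero_le_one) (hfF₁ 1 ⟨zero_le_one, le_refl 1⟩)
  clear_value u f g a l S F₁ N
  -- the constants
  set κ₁ : ℝ := Real.exp (-c) * min δ 1 * Real.exp (-(3 * |l|)) with hκ₁def
  set κ₂ : ℝ := (F₁ + 1) * (1 + δ⁻¹) * Real.exp (3 * |l|) with hκ₂def
  have hκ₁pos : 0 < κ₁ :=
    mul_pos (mul_pos (Real.exp_pos _) (lt_min hδpos one_pos)) (Real.exp_pos _)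
  have hκ₂pos : 0 < κ₂ := by
    have : (0:ℝ) < 1 + δ⁻¹ := by positivity
    have h2 : (0:ℝ) < F₁ + 1 := by linarith
    positivity
  clear_value κ₁ κ₂
  refine ⟨l, κ₁, κ₂, hκ₁pos, hκ₂pos, ?_⟩
  intro t ht i
  set n : ℕ := ⌊t⌋₊ with hndef
  clear_value n
  rw [show (exp (t • A) *ᵥ fun _ => (1:ℝ)) = u t by rw [hudef]]
  have hnle : (n : ℝ) ≤ t := by rw [hndef]; exact Nat.floor_le ht.le
  have htlt : t < n + 1 := by rw [hndef]; exact Nat.lt_floor_add_one t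
  have hs0 : 0 ≤ t - n := by linarith
  have hs1 : t - n ≤ 1 := by linarith
  constructor
  · -- lower bound
    rcases Nat.eq_zero_or_pos n with hn0 | hn1
    · have ht1 : t ≤ 1 := by
        rw [hn0] at htlt; push_cast at htlt; linarith
      have h1 : Real.exp (-(c * t)) ≤ u t i := hulow t ht.le i
      have h2 : Real.exp (-c) ≤ Real.exp (-(c * t)) :=
        Real.exp_le_exp.mpr (by nlinarith)
      have hlt_abs : l * t ≤ |l| := by
        calc l * t ≤ |l * t| := le_abs_self _
          _ = |l| * |t| := abs_mul l t
          _ ≤ |l| * 1 := by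
            apply mul_le_mul_of_nonneg_left _ (abs_nonneg l)
            rw [abs_of_pos ht]; exact ht1
          _ = |l| := mul_one _
      have h3 : κ₁ * Real.exp (l * t) ≤ Real.exp (-c) := by
        have hm1 : min δ 1 ≤ 1 := min_le_right _ _
        have hm0 : 0 < min δ 1 := lt_min hδpos one_pos
        have he : Real.exp (-(3 * |l|)) * Real.exp (l * t) ≤ 1 := by
          rw [← Real.exp_add]
          apply Real.exp_le_one_iff.mpr
          have := abs_nonneg l
          linarith
        calc κ₁ * Real.exp (l * t)
            = Real.exp (-c) * (min δ 1 * (Real.exp (-(3 * |l|)) * Real.exp (l * t))) := by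
              rw [hκ₁def]; ring
          _ ≤ Real.exp (-c) * 1 := by
              apply mul_le_mul_of_nonneg_left _ (Real.exp_nonneg _)
              calc min δ 1 * (Real.exp (-(3 * |l|)) * Real.exp (l * t))
                  ≤ 1 * 1 := mul_le_mul hm1 he (by positivity) zero_le_one
                _ = 1 := one_mul 1
          _ = Real.exp (-c) := mul_one _
      linarith
    · -- n ≥ 1
      have hnR1 : (1:ℝ) ≤ n := by exact_mod_cast hn1
      have hgs : Real.exp (-c) ≤ g (t - n) :=
        le_trans (Real.exp_le_exp.mpr (by nlinarith)) (hglow _ hs0)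
      have hbr := hbridge ((n : ℝ) - 1) (by linarith)
      have hn1' : (1:ℝ) + ((n : ℝ) - 1) = n := by ring
      rw [hn1'] at hbr
      have hcast : ((n - 1 : ℕ) : ℝ) = (n : ℝ) - 1 := by
        rw [Nat.cast_sub hn1, Nat.cast_one]
      have hfn1 := hflow_nat (n - 1)
      rw [hcast] at hfn1
      have hgn : δ * Real.exp (l * ((n:ℝ) - 1)) ≤ g n := by
        have h4 : δ * Real.exp (l * ((n:ℝ) - 1)) ≤ δ * f ((n:ℝ) - 1) :=
          mul_le_mul_of_nonneg_left hfn1 hδpos.le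
        exact le_trans h4 hbr
      have hgt : g ((t - n) + n) ≤ u t i := by
        have h8 : (t - n) + (n:ℝ) = t := by ring
        rw [h8]; exact hgle t i
      have hcomb : g (t - n) * g n ≤ u t i :=
        le_trans (hgsup (t - n) n hs0 (Nat.cast_nonneg n)) hgt
      have hexp2 : Real.exp (-(3 * |l|)) * Real.exp (l * t) ≤ Real.exp (l * ((n:ℝ) - 1)) := by
        rw [← Real.exp_add]
        apply Real.exp_le_exp.mpr
        have h5 : l * (t - ((n:ℝ) - 1)) ≤ |l| * (t - ((n:ℝ) - 1)) :=
          mul_le_mul_of_nonneg_right (le_abs_self l) (by linarith)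
        have h6 : |l| * (t - ((n:ℝ) - 1)) ≤ |l| * 2 :=
          mul_le_mul_of_nonneg_left (by linarith) (abs_nonneg l)
        have h7 : l * t - l * ((n:ℝ) - 1) = l * (t - ((n:ℝ) - 1)) := by ring
        linarith [abs_nonneg l]
      calc κ₁ * Real.exp (l * t)
          = Real.exp (-c) * (min δ 1 * (Real.exp (-(3 * |l|)) * Real.exp (l * t))) := by
            rw [hκ₁def]; ring
        _ ≤ Real.exp (-c) * (δ * Real.exp (l * ((n:ℝ) - 1))) := by
            apply mul_le_mul_of_nonneg_left _ (Real.exp_nonneg _)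
            exact mul_le_mul (min_le_left _ _) hexp2 (by positivity) hδpos.le
        _ ≤ g (t - n) * g n :=
            mul_le_mul hgs hgn (by positivity) (hgpos _ hs0).le
        _ ≤ u t i := hcomb
  · -- upper bound
    have hfs : f (t - n) ≤ F₁ := hfF₁ _ ⟨hs0, hs1⟩
    have hft : f t ≤ f (t - n) * f n := by
      have h7 := hfsub (t - n) n hs0 (Nat.cast_nonneg n)
      have h8 : (t - n) + (n:ℝ) = t := by ring
      rwa [h8] at h7
    rcases Nat.eq_zero_or_pos n with hn0 | hn1
    · have hfn : f ((n : ℕ) : ℝ) = 1 := by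
        rw [hn0, Nat.cast_zero]; exact hf0
      have h1 : f t ≤ F₁ := by
        rw [hfn, mul_one] at hft; exact le_trans hft hfs
      have ht1 : t ≤ 1 := by rw [hn0] at htlt; push_cast at htlt; linarith
      have hlt_abs : -|l| ≤ l * t := by
        have h11 : |l * t| ≤ |l| := by
          rw [abs_mul]
          calc |l| * |t| ≤ |l| * 1 := by
                apply mul_le_mul_of_nonneg_left _ (abs_nonneg l)
                rw [abs_of_pos ht]; exact ht1
            _ = |l| := mul_one _
        have := neg_abs_le (l * t)
        linarith
      have he1 : (1:ℝ) ≤ Real.exp (3 * |l|) * Real.exp (l * t) := by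
        rw [← Real.exp_add]
        apply Real.one_le_exp
        have := abs_nonneg l
        linarith
      have hδ1 : (1:ℝ) ≤ 1 + δ⁻¹ := by
        have : (0:ℝ) ≤ δ⁻¹ := by positivity
        linarith
      calc u t i ≤ f t := hfle t i
        _ ≤ F₁ := h1
        _ = F₁ * 1 := (mul_one F₁).symm
        _ ≤ F₁ * ((1 + δ⁻¹) * (Real.exp (3 * |l|) * Real.exp (l * t))) := by
            apply mul_le_mul_of_nonneg_left _ hF₁pos.le
            have hX := mul_le_mul hδ1 he1 zero_le_one (le_trans zero_le_one hδ1)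
            simpa using hX
        _ ≤ (F₁ + 1) * ((1 + δ⁻¹) * (Real.exp (3 * |l|) * Real.exp (l * t))) := by
            apply mul_le_mul_of_nonneg_right (by linarith) (by positivity)
        _ = κ₂ * Real.exp (l * t) := by rw [hκ₂def]; ring
    · have hnR1 : (1:ℝ) ≤ n := by exact_mod_cast hn1
      have hbr := hbridge (n : ℝ) (Nat.cast_nonneg n)
      have hgn1 : g (1 + (n:ℝ)) ≤ Real.exp (l * ((n:ℝ) + 1)) := by
        have h9 := hgup_nat (n + 1) (by omega)
        have hcast : ((n + 1 : ℕ) : ℝ) = (n:ℝ) + 1 := by push_cast; ring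
        rw [hcast] at h9
        have h12 : (1:ℝ) + (n:ℝ) = (n:ℝ) + 1 := by ring
        rw [h12]
        exact h9
      have hfn : f ((n:ℕ) : ℝ) ≤ δ⁻¹ * Real.exp (l * ((n:ℝ) + 1)) := by
        have h10 : δ * f ((n:ℕ) : ℝ) ≤ Real.exp (l * ((n:ℝ) + 1)) := le_trans hbr hgn1
        have h11 : f ((n:ℕ) : ℝ) ≤ Real.exp (l * ((n:ℝ) + 1)) / δ :=
          (le_div_iff₀' hδpos).mpr h10
        rw [div_eq_inv_mul] at h11
        exact h11
      have hexp3 : Real.exp (l * ((n:ℝ) + 1)) ≤ Real.exp (3 * |l|) * Real.exp (l * t) := by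
        rw [← Real.exp_add]
        apply Real.exp_le_exp.mpr
        have h5 : l * (((n:ℝ) + 1) - t) ≤ |l| * (((n:ℝ) + 1) - t) :=
          mul_le_mul_of_nonneg_right (le_abs_self l) (by linarith)
        have h6 : |l| * (((n:ℝ) + 1) - t) ≤ |l| * 1 :=
          mul_le_mul_of_nonneg_left (by linarith) (abs_nonneg l)
        have h7 : l * (((n:ℝ) + 1) - t) = l * ((n:ℝ) + 1) - l * t := by ring
        linarith [abs_nonneg l]
      calc u t i ≤ f t := hfle t i
        _ ≤ f (t - n) * f n := hft
        _ ≤ F₁ * (δ⁻¹ * Real.exp (l * ((n:ℝ) + 1))) :=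
            mul_le_mul hfs hfn (hfpos _ (Nat.cast_nonneg n)).le hF₁pos.le
        _ ≤ (F₁ + 1) * ((1 + δ⁻¹) * (Real.exp (3 * |l|) * Real.exp (l * t))) := by
            apply mul_le_mul (by linarith) ?_ (by positivity) (by linarith)
            apply mul_le_mul ?_ hexp3 (Real.exp_nonneg _) (by positivity)
            have h13 : (0:ℝ) < δ⁻¹ := by positivity
            linarith
        _ = κ₂ * Real.exp (l * t) := by rw [hκ₂def]; ring

lemma exp_entries_nonneg_of_offdiag (M : ℕ) (A : Matrix (Fin M) (Fin M) ℝ)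
    (hoffA : ∀ i j, i ≠ j → 0 ≤ A i j) {t : ℝ} (ht : 0 ≤ t) :
    ∀ i j, 0 ≤ (exp (t • A)) i j := by
  intro i j
  set c : ℝ := ∑ i, |A i i| with hcdef
  set N : Matrix (Fin M) (Fin M) ℝ := A + c • 1 with hNdef
  have hNnn : ∀ i j, 0 ≤ N i j := by
    intro i j
    by_cases hij : i = j
    · subst hij
      have h1 : |A i i| ≤ c := Finset.single_le_sum (fun i _ => abs_nonneg (A i i))
        (Finset.mem_univ i)
      have h2 : N i i = A i i + c := by
        rw [hNdef]
        simp [Matrix.add_apply, Matrix.smul_apply, Matrix.one_apply_eq, smul_eq_mul]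
      rw [h2]
      have := neg_abs_le (A i i)
      linarith
    · have h2 : N i j = A i j := by
        rw [hNdef]
        simp [Matrix.add_apply, Matrix.smul_apply, Matrix.one_apply_ne hij]
      rw [h2]; exact hoffA i j hij
  have hEN : exp (t • N) = Real.exp (c * t) • exp (t • A) := by
    rw [hNdef, smul_add, smul_smul, mul_comm t c, exp_add_smul_one]
  have hNtnn : ∀ i j, 0 ≤ (t • N) i j := by
    intro i j
    simp only [Matrix.smul_apply, smul_eq_mul]
    exact mul_nonneg ht (hNnn i j)
  have h3 := exp_entry_nonneg hNtnn i j
  rw [hEN] at h3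
  simp only [Matrix.smul_apply, smul_eq_mul] at h3
  nlinarith [Real.exp_pos (c * t)]

lemma core_re_le (M : ℕ) (hM : 0 < M) (A : Matrix (Fin M) (Fin M) ℝ)
    (hoffA : ∀ i j, i ≠ j → 0 ≤ A i j) (l κ₂ : ℝ) (hκ₂ : 0 < κ₂)
    (hup : ∀ t : ℝ, 0 < t → ∀ i, (exp (t • A) *ᵥ fun _ => (1:ℝ)) i ≤ κ₂ * Real.exp (l * t)) :
    ∀ z ∈ spectrum ℂ (A.map Complex.ofReal), z.re ≤ l := by
  intro z hz
  have hne : (Finset.univ : Finset (Fin M)).Nonempty := ⟨⟨0, hM⟩, Finset.mem_univ _⟩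
  set Ac : Matrix (Fin M) (Fin M) ℂ := A.map Complex.ofReal with hAcdef
  have hdet : (z • (1 : Matrix (Fin M) (Fin M) ℂ) - Ac).det = 0 := by
    by_contra hd0
    apply spectrum.mem_iff.mp hz
    rw [Algebra.algebraMap_eq_smul_one]
    exact (Matrix.isUnit_iff_isUnit_det _).mpr (isUnit_iff_ne_zero.mpr hd0)
  obtain ⟨v, hv0, hveq⟩ := Matrix.exists_mulVec_eq_zero_iff.mpr hdet
  have hAcv : Ac *ᵥ v = z • v := by
    have h1 : (z • (1 : Matrix (Fin M) (Fin M) ℂ) - Ac) *ᵥ v = z • v - Ac *ᵥ v := by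
      rw [Matrix.sub_mulVec, Matrix.smul_mulVec, Matrix.one_mulVec]
    rw [h1] at hveq
    exact (sub_eq_zero.mp hveq).symm
  obtain ⟨imax, _, himax⟩ := Finset.exists_mem_eq_sup' hne (fun j => ‖v j‖)
  set W : ℝ := ‖v imax‖ with hWdef
  have hW : ∀ j, ‖v j‖ ≤ W := by
    intro j
    have h0 := Finset.le_sup' (fun j => ‖v j‖) (Finset.mem_univ j)
    rwa [himax] at h0
  have hWpos : 0 < W := by
    rcases Function.ne_iff.mp hv0 with ⟨j, hj⟩
    calc (0:ℝ) < ‖v j‖ := by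
          simpa [norm_pos_iff] using hj
      _ ≤ W := hW j
  by_contra hlt
  push_neg at hlt
  have key : ∀ t : ℝ, 0 < t → Real.exp (t * z.re) ≤ κ₂ * Real.exp (l * t) := by
    intro t ht
    have hmap : t • Ac = (t • A).map Complex.ofReal := by
      ext i j
      simp [hAcdef, Matrix.map_apply, Matrix.smul_apply, Complex.real_smul, smul_eq_mul]
    have hEt : exp (t • Ac) = (exp (t • A)).map Complex.ofReal := by
      rw [hmap, exp_map_ofReal]
    have hvec := exp_mulVec_eigen Ac v z hAcv t
    have hEnn := exp_entries_nonneg_of_offdiag M A hoffA ht.le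
    have hleft : ‖(exp (t • Ac) *ᵥ v) imax‖ = Real.exp (t * z.re) * W := by
      rw [hvec]
      have hre : ((t : ℂ) * z).re = t * z.re := by simp [Complex.mul_re]
      simp [Pi.smul_apply, smul_eq_mul, norm_mul, Complex.norm_exp, hre, hWdef]
    have hright : ‖(exp (t • Ac) *ᵥ v) imax‖ ≤ κ₂ * Real.exp (l * t) * W := by
      rw [hEt]
      have h1 : (((exp (t • A)).map Complex.ofReal) *ᵥ v) imax
          = ∑ j, ((exp (t • A)) imax j : ℂ) * v j := by
        simp [Matrix.mulVec, dotProduct, Matrix.map_apply]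
      rw [h1]
      calc ‖∑ j, ((exp (t • A)) imax j : ℂ) * v j‖
          ≤ ∑ j, ‖((exp (t • A)) imax j : ℂ) * v j‖ :=
            norm_sum_le _ _
        _ ≤ ∑ j, (exp (t • A)) imax j * W := by
            apply Finset.sum_le_sum
            intro j _
            rw [norm_mul, Complex.norm_real, Real.norm_eq_abs, abs_of_nonneg (hEnn imax j)]
            exact mul_le_mul_of_nonneg_left (hW j) (hEnn imax j)
        _ = (∑ j, (exp (t • A)) imax j) * W := by rw [Finset.sum_mul]
        _ ≤ κ₂ * Real.exp (l * t) * W := by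
            apply mul_le_mul_of_nonneg_right _ (norm_nonneg _)
            have h2 : (exp (t • A) *ᵥ fun _ => (1:ℝ)) imax
                = ∑ j, (exp (t • A)) imax j := by
              simp [Matrix.mulVec, dotProduct]
            rw [← h2]
            exact hup t ht imax
    have := le_trans (le_of_eq hleft.symm) hright
    exact le_of_mul_le_mul_right this hWpos
  set ε : ℝ := z.re - l with hεdef
  have hε : 0 < ε := by rw [hεdef]; linarith
  set T : ℝ := (|Real.log κ₂| + 1) / ε with hTdef
  have hT : 0 < T := by positivity
  have h3 := key T hT
  have h4 : Real.exp (ε * T) ≤ κ₂ := by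
    have h5 : Real.exp (T * z.re) = Real.exp (ε * T) * Real.exp (l * T) := by
      rw [← Real.exp_add]; congr 1; rw [hεdef]; ring
    rw [h5] at h3
    have := Real.exp_pos (l * T)
    nlinarith
  have h6 : ε * T ≤ Real.log κ₂ := (Real.le_log_iff_exp_le hκ₂).mpr h4
  have h7 : ε * T = |Real.log κ₂| + 1 := by
    rw [hTdef]; field_simp
  have := le_abs_self (Real.log κ₂)
  linarith

lemma core_mem (M : ℕ) (hM : 0 < M) (A : Matrix (Fin M) (Fin M) ℝ)
    (hoffA : ∀ i j, i ≠ j → 0 ≤ A i j) (l κ₁ κ₂ : ℝ) (hκ₁ : 0 < κ₁) (hκ₂ : 0 < κ₂)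
    (hlow : ∀ t : ℝ, 0 < t → ∀ i, κ₁ * Real.exp (l * t) ≤ (exp (t • A) *ᵥ fun _ => (1:ℝ)) i)
    (hup : ∀ t : ℝ, 0 < t → ∀ i, (exp (t • A) *ᵥ fun _ => (1:ℝ)) i ≤ κ₂ * Real.exp (l * t)) :
    (l : ℂ) ∈ spectrum ℂ (A.map Complex.ofReal) := by
  have hne : (Finset.univ : Finset (Fin M)).Nonempty := ⟨⟨0, hM⟩, Finset.mem_univ _⟩
  by_contra hns
  have hunit : IsUnit (algebraMap ℂ (Matrix (Fin M) (Fin M) ℂ) (l : ℂ) - A.map Complex.ofReal) :=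
    spectrum.notMem_iff.mp hns
  rw [Algebra.algebraMap_eq_smul_one] at hunit
  have hdetC : ((l : ℂ) • (1 : Matrix (Fin M) (Fin M) ℂ) - A.map Complex.ofReal).det ≠ 0 :=
    ((Matrix.isUnit_iff_isUnit_det _).mp hunit).ne_zero
  have hmap : (l : ℂ) • (1 : Matrix (Fin M) (Fin M) ℂ) - A.map Complex.ofReal
      = (l • (1 : Matrix (Fin M) (Fin M) ℝ) - A).map Complex.ofReal := by
    ext i j
    by_cases hij : i = j <;>
      simp [Matrix.map_apply, Matrix.sub_apply, Matrix.smul_apply, Matrix.one_apply, hij,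
        smul_eq_mul]
  have hdetR : (l • (1 : Matrix (Fin M) (Fin M) ℝ) - A).det ≠ 0 := by
    intro h0
    apply hdetC
    rw [hmap]
    have h1 : ((l • (1 : Matrix (Fin M) (Fin M) ℝ) - A).map Complex.ofReal).det
        = (((l • (1 : Matrix (Fin M) (Fin M) ℝ) - A).det : ℝ) : ℂ) := by
      have h2 := RingHom.map_det (Complex.ofRealHom) (l • (1 : Matrix (Fin M) (Fin M) ℝ) - A)
      rw [RingHom.mapMatrix_apply] at h2
      exact h2.symm
    rw [h1, h0]
    simp
  have hu' : IsUnit (l • (1 : Matrix (Fin M) (Fin M) ℝ) - A).det := isUnit_iff_ne_zero.mpr hdetR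
  set B : Matrix (Fin M) (Fin M) ℝ := l • 1 - A with hBdef
  set w : Fin M → ℝ := B⁻¹ *ᵥ (fun _ => 1) with hwdef
  have hBw : B *ᵥ w = (fun _ => (1:ℝ)) := by
    rw [hwdef, Matrix.mulVec_mulVec, Matrix.mul_nonsing_inv _ hu', Matrix.one_mulVec]
  have hAw : A *ᵥ w = l • w - (fun _ => (1:ℝ)) := by
    have h1 : B *ᵥ w = l • w - A *ᵥ w := by
      rw [hBdef, Matrix.sub_mulVec, Matrix.smul_mulVec, Matrix.one_mulVec]
    rw [hBw] at h1
    have h2 : A *ᵥ w + (fun _ => (1:ℝ)) = l • w := by rw [h1]; abel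
    rw [← h2]
    abel
  clear_value w
  clear_value B
  set i0 : Fin M := ⟨0, hM⟩ with hi0def
  set ψ : ℝ → ℝ := fun s => Real.exp (-l * s) * ((exp (s • A) *ᵥ w) i0) with hψdef
  have hψd : ∀ τ : ℝ, HasDerivAt ψ
      (-(Real.exp (-l * τ) * ((exp (τ • A) *ᵥ fun _ => (1:ℝ)) i0))) τ := by
    intro τ
    have h0 : HasDerivAt (fun s : ℝ => -l * s) (-l) τ := by
      simpa using (hasDerivAt_id τ).const_mul (-l)
    have h1 : HasDerivAt (fun s : ℝ => Real.exp (-l * s)) (Real.exp (-l * τ) * (-l)) τ := h0.exp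
    have h2 := hasDerivAt_exp_mulVec A w i0 τ
    have h3 := h1.mul h2
    have h4 : (exp (τ • A) *ᵥ (A *ᵥ w)) i0
        = l * ((exp (τ • A) *ᵥ w) i0) - (exp (τ • A) *ᵥ fun _ => (1:ℝ)) i0 := by
      rw [hAw, Matrix.mulVec_sub, Matrix.mulVec_smul]
      simp [Pi.sub_apply, Pi.smul_apply, smul_eq_mul]
    rw [h4] at h3
    exact h3.congr_deriv (by ring)
  set W : ℝ := Finset.univ.sup' hne (fun j => |w j|) with hWdef
  have hWj : ∀ j, |w j| ≤ W := by
    intro j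
    have h0 := Finset.le_sup' (fun j => |w j|) (Finset.mem_univ j)
    rw [← hWdef] at h0
    exact h0
  have hW0 : 0 ≤ W := le_trans (abs_nonneg (w i0)) (hWj i0)
  clear_value W
  have hψlb : ∀ T : ℝ, 0 < T → -(κ₂ * W) ≤ ψ T := by
    intro T hT
    have hEnn := exp_entries_nonneg_of_offdiag M A hoffA hT.le
    have hexpand : (exp (T • A) *ᵥ w) i0 = ∑ j, (exp (T • A)) i0 j * w j := by
      simp [Matrix.mulVec, dotProduct]
    have h1 : -(∑ j, (exp (T • A)) i0 j * W) ≤ ∑ j, (exp (T • A)) i0 j * w j := by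
      have h2 : 0 ≤ ∑ j, ((exp (T • A)) i0 j * w j + (exp (T • A)) i0 j * W) := by
        apply Finset.sum_nonneg
        intro j _
        have h3 : -W ≤ w j := by
          have := abs_le.mp (hWj j)
          linarith [this.1]
        nlinarith [hEnn i0 j]
      rw [Finset.sum_add_distrib] at h2
      linarith
    have h2 : ∑ j, (exp (T • A)) i0 j * W ≤ κ₂ * Real.exp (l * T) * W := by
      rw [← Finset.sum_mul]
      apply mul_le_mul_of_nonneg_right _ hW0
      have h3 : (exp (T • A) *ᵥ fun _ => (1:ℝ)) i0 = ∑ j, (exp (T • A)) i0 j := by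
        simp [Matrix.mulVec, dotProduct]
      rw [← h3]
      exact hup T hT i0
    have he : Real.exp (-l * T) * Real.exp (l * T) = 1 := by
      rw [← Real.exp_add]; ring_nf; exact Real.exp_zero
    have hψT : ψ T = Real.exp (-l * T) * ((exp (T • A) *ᵥ w) i0) := rfl
    rw [hψT, hexpand]
    calc -(κ₂ * W) = Real.exp (-l * T) * (-(κ₂ * Real.exp (l * T) * W)) := by
          rw [mul_neg, neg_inj]
          calc κ₂ * W = (Real.exp (-l * T) * Real.exp (l * T)) * (κ₂ * W) := by
                rw [he, one_mul]
            _ = Real.exp (-l * T) * (κ₂ * Real.exp (l * T) * W) := by ring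
      _ ≤ Real.exp (-l * T) * (∑ j, (exp (T • A)) i0 j * w j) := by
          apply mul_le_mul_of_nonneg_left _ (Real.exp_nonneg _)
          linarith
  set Φ : ℝ → ℝ := fun s => ψ s + κ₁ * s with hΦdef
  have hΦd : ∀ τ : ℝ, HasDerivAt Φ
      (-(Real.exp (-l * τ) * ((exp (τ • A) *ᵥ fun _ => (1:ℝ)) i0)) + κ₁) τ := by
    intro τ
    have h4 : HasDerivAt (fun s : ℝ => κ₁ * s) κ₁ τ := by
      simpa using (hasDerivAt_id τ).const_mul κ₁
    exact (hψd τ).add h4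
  have hΦcont : Continuous Φ := by
    rw [continuous_iff_continuousAt]
    intro x
    exact (hΦd x).continuousAt
  have hanti : AntitoneOn Φ (Set.Ici (1:ℝ)) := by
    apply antitoneOn_of_deriv_nonpos (convex_Ici 1) hΦcont.continuousOn
    · intro x _
      exact (hΦd x).differentiableAt.differentiableWithinAt
    · intro x hx
      rw [interior_Ici] at hx
      have hxpos : (0:ℝ) < x := lt_trans one_pos hx
      rw [(hΦd x).deriv]
      have h5 := hlow x hxpos i0
      have he : Real.exp (-l * x) * Real.exp (l * x) = 1 := by
        rw [← Real.exp_add]; ring_nf; exact Real.exp_zero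
      have h6 : κ₁ ≤ Real.exp (-l * x) * ((exp (x • A) *ᵥ fun _ => (1:ℝ)) i0) := by
        calc κ₁ = (Real.exp (-l * x) * Real.exp (l * x)) * κ₁ := by rw [he, one_mul]
          _ = Real.exp (-l * x) * (κ₁ * Real.exp (l * x)) := by ring
          _ ≤ Real.exp (-l * x) * ((exp (x • A) *ᵥ fun _ => (1:ℝ)) i0) :=
              mul_le_mul_of_nonneg_left h5 (Real.exp_nonneg _)
      linarith
  set T : ℝ := max 1 ((ψ 1 + κ₁ + κ₂ * W + 1) / κ₁) with hTdef
  have hT1 : (1:ℝ) ≤ T := le_max_left _ _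
  have hTlarge : ψ 1 + κ₁ + κ₂ * W + 1 ≤ κ₁ * T := by
    have h7 : (ψ 1 + κ₁ + κ₂ * W + 1) / κ₁ ≤ T := le_max_right _ _
    rw [div_le_iff₀ hκ₁] at h7
    linarith
  have hΦle : Φ T ≤ Φ 1 := hanti (Set.mem_Ici.mpr le_rfl) (Set.mem_Ici.mpr hT1) hT1
  have hψT := hψlb T (lt_of_lt_of_le one_pos hT1)
  have hΦT : Φ T = ψ T + κ₁ * T := rfl
  have hΦ1 : Φ 1 = ψ 1 + κ₁ * 1 := rfl
  rw [hΦT, hΦ1] at hΦle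
  linarith


end FKAux

/-- Exact exponential rate of the Feynman–Kac semigroup: for an irreducible
conservative `Q`-matrix `Q̄` on `Fin M`, `C : Fin M → ℝ`, `p > 0`,
`Q̄_p = Q̄ + p • diagonal C`, and
`η_{p,C} = -max { Re γ : γ ∈ Spec Q̄_p }`, there are constants
`κ₁(p), κ₂(p) > 0` such that for every `i₀` and all `t > 0`,
`κ₁ e^{-η t} ≤ (e^{t Q̄_p} 𝟙)_{i₀} ≤ κ₂ e^{-η t}`. -/
theorem feynman_kac_exponential_rate
    (M : ℕ) (hM : 0 < M) (Qb : Matrix (Fin M) (Fin M) ℝ)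
    (hoff : ∀ i j, i ≠ j → 0 ≤ Qb i j)
    (hcons : ∀ i, ∑ j, Qb i j = 0)
    (hirr : ∀ i j : Fin M, i ≠ j → ∃ (k : ℕ) (c : Fin (k + 1) → Fin M),
      c 0 = i ∧ c (Fin.last k) = j ∧ ∀ l : Fin k, 0 < Qb (c l.castSucc) (c l.succ))
    (C : Fin M → ℝ) (p : ℝ) (hp : 0 < p)
    (η : ℝ)
    (hη : IsGreatest {x : ℝ | ∃ z ∈
        spectrum ℂ ((Qb + p • Matrix.diagonal C).map Complex.ofReal), x = z.re} (-η)) :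
    ∃ κ₁ κ₂ : ℝ, 0 < κ₁ ∧ 0 < κ₂ ∧ ∀ i₀ : Fin M, ∀ t : ℝ, 0 < t →
      κ₁ * Real.exp (-η * t) ≤
        (NormedSpace.exp (t • (Qb + p • Matrix.diagonal C)) *ᵥ (fun _ => (1 : ℝ))) i₀ ∧
      (NormedSpace.exp (t • (Qb + p • Matrix.diagonal C)) *ᵥ (fun _ => (1 : ℝ))) i₀ ≤
        κ₂ * Real.exp (-η * t) := by
  set A : Matrix (Fin M) (Fin M) ℝ := Qb + p • Matrix.diagonal C with hAdef
  have hAentry : ∀ i j, i ≠ j → A i j = Qb i j := by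
    intro i j hij
    rw [hAdef]
    simp [Matrix.add_apply, Matrix.smul_apply, Matrix.diagonal_apply_ne _ hij]
  have hoffA : ∀ i j, i ≠ j → 0 ≤ A i j := by
    intro i j hij
    rw [hAentry i j hij]
    exact hoff i j hij
  have hdiagQb : ∀ x : Fin M, Qb x x ≤ 0 := by
    intro x
    have h1 := hcons x
    have h2 : 0 ≤ ∑ j ∈ Finset.univ.erase x, Qb x j :=
      Finset.sum_nonneg fun j hj => hoff x j (Ne.symm (Finset.mem_erase.mp hj).1)
    have h3 : Qb x x + ∑ j ∈ Finset.univ.erase x, Qb x j = 0 := by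
      rw [Finset.add_sum_erase _ _ (Finset.mem_univ x)]
      exact h1
    linarith
  have hirrA : ∀ i j : Fin M, i ≠ j → ∃ k : ℕ, ∃ d : ℕ → Fin M, d 0 = i ∧ d k = j ∧
      ∀ l, l < k → d l ≠ d (l + 1) ∧ 0 < A (d l) (d (l + 1)) := by
    intro i j hij
    obtain ⟨k, pc, h0, hlast, hstep⟩ := hirr i j hij
    refine ⟨k, fun l => pc ⟨min l k, by omega⟩, ?_, ?_, ?_⟩
    · rw [← h0]
      congr 1
    · rw [← hlast]
      congr 1
      ext
      simp [Fin.last]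
    · intro l hl
      have hm1 : min l k = l := min_eq_left hl.le
      have hm2 : min (l + 1) k = l + 1 := min_eq_left (by omega)
      have hQ := hstep ⟨l, hl⟩
      have e1 : pc (Fin.castSucc ⟨l, hl⟩) = pc ⟨min l k, by omega⟩ := by
        congr 1
        ext
        simp [hm1]
      have e2 : pc (Fin.succ ⟨l, hl⟩) = pc ⟨min (l + 1) k, by omega⟩ := by
        congr 1
        ext
        simp [hm2]
      rw [e1, e2] at hQ
      have hne' : pc ⟨min l k, by omega⟩ ≠ pc ⟨min (l + 1) k, by omega⟩ := by
        intro he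
        rw [he] at hQ
        exact absurd hQ (not_lt.mpr (hdiagQb _))
      refine ⟨hne', ?_⟩
      rw [hAentry _ _ hne']
      exact hQ
  obtain ⟨l, κ₁, κ₂, hκ₁, hκ₂, hbnd⟩ := core_bounds M hM A hoffA hirrA
  have hup : ∀ t : ℝ, 0 < t → ∀ i,
      (exp (t • A) *ᵥ fun _ => (1:ℝ)) i ≤ κ₂ * Real.exp (l * t) :=
    fun t ht i => (hbnd t ht i).2
  have hlow : ∀ t : ℝ, 0 < t → ∀ i,
      κ₁ * Real.exp (l * t) ≤ (exp (t • A) *ᵥ fun _ => (1:ℝ)) i :=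
    fun t ht i => (hbnd t ht i).1
  have hre := core_re_le M hM A hoffA l κ₂ hκ₂ hup
  have hmem := core_mem M hM A hoffA l κ₁ κ₂ hκ₁ hκ₂ hlow hup
  have h1 : l ≤ -η := hη.2 ⟨(l : ℂ), hmem, (Complex.ofReal_re l).symm⟩
  have h2 : -η ≤ l := by
    obtain ⟨z, hz, hzre⟩ := hη.1
    rw [hzre]
    exact hre z hz
  have hl : l = -η := le_antisymm h1 h2
  refine ⟨κ₁, κ₂, hκ₁, hκ₂, fun i₀ t ht => ?_⟩
  have h3 := hbnd t ht i₀
  rw [← hl]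
  exact h3
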